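/- There exists a constant C depending only on n and p such that the following holds: if g is nonnegative, u is a radially decreasing W^{1,p} solution of -Δ_p u = g(u) on the punctured unit ball (in radial coordinates) with u(r) > 0 for r ∈ (0,1) and u(1) = 0, then ∫_0^{1/4} r^{n-1} g(u(r)) dr ≤ C ∫_0^{1/2} s^{n-1} u(s)^{p-1} ds. -/

import Mathlib

open MeasureTheory Set Real Filter

/-- The radial `W^{1,p}` norm of a radial function `u` with radial derivative `u'`
on the unit ball of `ℝ^n`, written in radial coordinates. -/
noncomputable def radialNorm (n : ℕ) (p : ℝ) (u u' : ℝ → ℝ) : ℝ :=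
  (∫ r in Ioc (0:ℝ) 1, r ^ ((n : ℝ) - 1) * (|u r| ^ p + |u' r| ^ p)) ^ (1 / p)

/-- `u : (0,1] → ℝ` (with radial derivative `u'`) is a radially decreasing `W^{1,p}`
solution of `-Δ_p u = g(u)` on the punctured unit ball, in radial coordinates:
`u` is `C^1` on `(0,1]` with derivative `u'`, `u' < 0` on `(0,1)`,
`r ↦ r^{n-1}|u'|^{p-2}u'` has derivative `-r^{n-1} g(u(r))` on `(0,1)`, and the radial
`W^{1,p}` norm of `u` is finite. -/
def IsRadialSolution (n : ℕ) (p : ℝ) (g : ℝ → ℝ) (u u' : ℝ → ℝ) : Prop :=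
  (∀ r ∈ Ioc (0:ℝ) 1, HasDerivWithinAt u (u' r) (Ioc (0:ℝ) 1) r) ∧
  ContinuousOn u' (Ioc (0:ℝ) 1) ∧
  (∀ r ∈ Ioo (0:ℝ) 1, u' r < 0) ∧
  (∀ r ∈ Ioo (0:ℝ) 1,
    HasDerivAt (fun s : ℝ => s ^ ((n : ℝ) - 1) * |u' s| ^ (p - 2) * u' s)
      (-(r ^ ((n : ℝ) - 1) * g (u r))) r) ∧
  IntegrableOn (fun r : ℝ => r ^ ((n : ℝ) - 1) * (|u r| ^ p + |u' r| ^ p)) (Ioc (0:ℝ) 1)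

/-- Semi-stability of a radial solution: the second variation of energy is nonnegative
for every `C^1` test function with compact support in `(0,1)`. -/
def IsSemiStable (n : ℕ) (p : ℝ) (g : ℝ → ℝ) (u u' : ℝ → ℝ) : Prop :=
  ∀ ξ : ℝ → ℝ, ContDiff ℝ 1 ξ → IsCompact (tsupport ξ) → tsupport ξ ⊆ Ioo (0:ℝ) 1 →
    0 ≤ ∫ r in Ioc (0:ℝ) 1,
        r ^ ((n : ℝ) - 1) *
          ((p - 1) * |u' r| ^ (p - 2) * (deriv ξ r) ^ 2 - deriv g (u r) * (ξ r) ^ 2)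


open Topology in
set_option maxHeartbeats 1000000 in
theorem stmt17 (n : ℕ) (hn : 1 ≤ n) (p : ℝ) (hp : 1 < p) :
    ∃ C : ℝ, 0 < C ∧ ∀ (g u u' : ℝ → ℝ), ContDiff ℝ 1 g → (∀ t : ℝ, 0 ≤ g t) →
      IsRadialSolution n p g u u' →
      (∀ r ∈ Ioo (0:ℝ) 1, 0 < u r) → u 1 = 0 →
      IntegrableOn (fun r : ℝ => r ^ ((n : ℝ) - 1) * g (u r)) (Ioc (0:ℝ) (1/4)) ∧
      ∫ r in Ioc (0:ℝ) (1/4), r ^ ((n : ℝ) - 1) * g (u r)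
        ≤ C * ∫ s in Ioc (0:ℝ) (1/2), s ^ ((n : ℝ) - 1) * (u s) ^ (p - 1) := by
  have hp1 : (0:ℝ) < p - 1 := by linarith
  have hnn : (0:ℝ) ≤ (n : ℝ) - 1 := by
    have : (1:ℝ) ≤ (n : ℝ) := by exact_mod_cast hn
    linarith
  set c : ℝ := (1/4 : ℝ) ^ (((n:ℝ) - 1)/(p - 1)) with hc_def
  have hc_pos : 0 < c := Real.rpow_pos_of_pos (by norm_num) _
  have hcp : c ^ (p - 1) = (1/4 : ℝ) ^ ((n:ℝ) - 1) := by
    rw [hc_def, ← Real.rpow_mul (by norm_num : (0:ℝ) ≤ 1/4),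
      div_mul_cancel₀ _ (ne_of_gt hp1)]
  refine ⟨(4:ℝ)^n * 2^(p-1), by positivity, ?_⟩
  intro g u u' hgC hg0 hsol hupos hu1
  obtain ⟨hud, hu'c, hu'neg, hFd, hInt⟩ := hsol
  set F : ℝ → ℝ := fun s : ℝ => s ^ ((n : ℝ) - 1) * |u' s| ^ (p - 2) * u' s with hF_def
  have hucont : ContinuousOn u (Ioc (0:ℝ) 1) := fun r hr => (hud r hr).continuousWithinAt
  -- algebraic identity for |x|^(p-2)*x when x < 0
  have habs : ∀ x : ℝ, x < 0 → |x| ^ (p-2) * x = -((-x) ^ (p-1)) := by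
    intro x hx
    have hx' : (0:ℝ) < -x := by linarith
    have h1 : (-x) ^ (p-2) * (-x) = (-x) ^ (p-1) := by
      rw [← Real.rpow_add_one (ne_of_gt hx'), show p - 2 + 1 = p - 1 by ring]
    rw [abs_of_neg hx, ← h1]; ring
  have hFform : ∀ r ∈ Ioo (0:ℝ) 1, F r = -(r ^ ((n:ℝ)-1) * (-u' r) ^ (p-1)) := by
    intro r hr
    have h := habs (u' r) (hu'neg r hr)
    rw [hF_def]
    simp only []
    rw [mul_assoc, h]
    ring
  have h14 : (1/4:ℝ) ∈ Ioo (0:ℝ) 1 := by norm_num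
  set A : ℝ := -u' (1/4) with hA_def
  have hA : 0 < A := by
    rw [hA_def]; exact neg_pos.2 (hu'neg _ h14)
  set B : ℝ := (1/4:ℝ) ^ ((n:ℝ)-1) * A ^ (p-1) with hB_def
  have hB : 0 < B := by rw [hB_def]; positivity
  have hF14 : F (1/4) = -B := by
    rw [hB_def, hA_def]
    exact hFform _ h14
  have hgu_cont : ContinuousOn (fun r : ℝ => r ^ ((n:ℝ)-1) * g (u r)) (Ioc (0:ℝ) 1) := by
    apply ContinuousOn.mul
    · exact continuousOn_id.rpow_const fun x hx => Or.inl (ne_of_gt hx.1)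
    · exact hgC.continuous.comp_continuousOn hucont
  have hF_cont : ContinuousOn F (Ioo (0:ℝ) 1) :=
    fun r hr => (hFd r hr).continuousAt.continuousWithinAt
  have hFanti : AntitoneOn F (Ioo (0:ℝ) 1) := by
    apply antitoneOn_of_deriv_nonpos (convex_Ioo _ _) hF_cont
    · intro x hx
      rw [interior_Ioo] at hx
      exact (hFd x hx).differentiableAt.differentiableWithinAt
    · intro x hx
      rw [interior_Ioo] at hx
      rw [(hFd x hx).deriv]
      have : 0 ≤ x ^ ((n:ℝ)-1) * g (u x) :=
        mul_nonneg (Real.rpow_nonneg hx.1.le _) (hg0 _)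
      linarith
  have hFnonpos : ∀ ε ∈ Ioo (0:ℝ) 1, F ε ≤ 0 := by
    intro ε hε
    rw [hFform ε hε]
    have : 0 ≤ ε ^ ((n:ℝ)-1) * (-u' ε) ^ (p-1) :=
      mul_nonneg (Real.rpow_nonneg hε.1.le _) (Real.rpow_nonneg (by linarith [hu'neg ε hε]) _)
    linarith
  -- FTC on [ε, 1/4]
  have hIccsub14 : ∀ ε : ℝ, 0 < ε → Icc ε (1/4:ℝ) ⊆ Ioo (0:ℝ) 1 := by
    intro ε hε x hx
    exact ⟨lt_of_lt_of_le hε hx.1, by linarith [hx.2]⟩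
  have hIntOn : ∀ ε : ℝ, 0 < ε →
      IntegrableOn (fun r : ℝ => r ^ ((n:ℝ)-1) * g (u r)) (Ioc ε (1/4)) := by
    intro ε hε
    exact ((hgu_cont.mono ((hIccsub14 ε hε).trans Ioo_subset_Ioc_self)).integrableOn_Icc).mono_set
      Ioc_subset_Icc_self
  have hFTC : ∀ ε : ℝ, 0 < ε → ε ≤ 1/4 →
      ∫ r in Ioc ε (1/4:ℝ), r ^ ((n:ℝ)-1) * g (u r) = F ε - F (1/4) := by
    intro ε hε hε4
    have hderiv : ∀ x ∈ uIcc ε (1/4:ℝ), HasDerivAt F (-(x ^ ((n:ℝ)-1) * g (u x))) x := by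
      intro x hx
      rw [uIcc_of_le hε4] at hx
      exact hFd x (hIccsub14 ε hε hx)
    have hint : IntervalIntegrable (fun r : ℝ => -(r ^ ((n:ℝ)-1) * g (u r))) volume ε (1/4) := by
      rw [intervalIntegrable_iff_integrableOn_Icc_of_le hε4]
      exact ((hgu_cont.mono ((hIccsub14 ε hε).trans Ioo_subset_Ioc_self)).neg).integrableOn_Icc
    have h2 : ∫ y in ε..(1/4:ℝ), -(y ^ ((n:ℝ)-1) * g (u y)) = F (1/4) - F ε :=
      intervalIntegral.integral_eq_sub_of_hasDerivAt hderiv hint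
    rw [intervalIntegral.integral_neg] at h2
    rw [← intervalIntegral.integral_of_le hε4]
    linarith
  have hFTCle : ∀ ε : ℝ, 0 < ε → ε ≤ 1/4 →
      ∫ r in Ioc ε (1/4:ℝ), r ^ ((n:ℝ)-1) * g (u r) ≤ B := by
    intro ε hε hε4
    rw [hFTC ε hε hε4, hF14]
    have := hFnonpos ε ⟨hε, by linarith⟩
    linarith
  -- sequence tending to 0
  set a : ℕ → ℝ := fun i => (1/4:ℝ) * (1/2)^i with ha_def
  have ha_pos : ∀ i, 0 < a i := fun i => by positivity
  have ha_le : ∀ i, a i ≤ 1/4 := by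
    intro i
    rw [ha_def]
    nlinarith [pow_le_one₀ (by norm_num : (0:ℝ) ≤ 1/2) (by norm_num : (1/2:ℝ) ≤ 1) (n := i)]
  have ha_tendsto : Tendsto a atTop (𝓝 0) := by
    rw [ha_def]
    have h := tendsto_pow_atTop_nhds_zero_of_lt_one (by norm_num : (0:ℝ) ≤ 1/2)
      (by norm_num : (1/2:ℝ) < 1)
    have := h.const_mul (1/4:ℝ)
    simpa using this
  have hnonneg : ∀ x ∈ Ioc (0:ℝ) 1, 0 ≤ x ^ ((n:ℝ)-1) * g (u x) := fun x hx =>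
    mul_nonneg (Real.rpow_nonneg hx.1.le _) (hg0 _)
  have hnormint : ∀ i, ∫ x in Ioc (a i) (1/4:ℝ), ‖x ^ ((n:ℝ)-1) * g (u x)‖ ≤ B := by
    intro i
    have heq : ∀ x ∈ Ioc (a i) (1/4:ℝ), ‖x ^ ((n:ℝ)-1) * g (u x)‖ = x ^ ((n:ℝ)-1) * g (u x) := by
      intro x hx
      exact norm_of_nonneg (hnonneg x ⟨lt_trans (ha_pos i) hx.1, by linarith [hx.2]⟩)
    rw [setIntegral_congr_fun measurableSet_Ioc heq]
    exact hFTCle (a i) (ha_pos i) (ha_le i)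
  have hInt14 : IntegrableOn (fun r : ℝ => r ^ ((n:ℝ)-1) * g (u r)) (Ioc (0:ℝ) (1/4)) := by
    apply MeasureTheory.integrableOn_Ioc_of_intervalIntegral_norm_bounded_left
      (fun i => hIntOn (a i) (ha_pos i)) ha_tendsto
    exact Eventually.of_forall hnormint
  refine ⟨hInt14, ?_⟩
  -- the limit argument for the value of the integral
  have hmono : Monotone (fun i => Ioc (a i) (1/4:ℝ)) := by
    intro i j hij
    apply Ioc_subset_Ioc_left
    rw [ha_def]
    have := pow_le_pow_of_le_one (by norm_num : (0:ℝ) ≤ 1/2) (by norm_num : (1/2:ℝ) ≤ 1) hij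
    nlinarith
  have hUnion : ⋃ i, Ioc (a i) (1/4:ℝ) = Ioc (0:ℝ) (1/4) := by
    ext x
    simp only [mem_iUnion, mem_Ioc]
    constructor
    · rintro ⟨i, h1, h2⟩
      exact ⟨lt_trans (ha_pos i) h1, h2⟩
    · rintro ⟨hx0, hx4⟩
      obtain ⟨i, hi⟩ := (ha_tendsto.eventually (gt_mem_nhds hx0)).exists
      exact ⟨i, hi, hx4⟩
  have hlim : Tendsto (fun i => ∫ x in Ioc (a i) (1/4:ℝ), x ^ ((n:ℝ)-1) * g (u x)) atTop
      (𝓝 (∫ x in Ioc (0:ℝ) (1/4:ℝ), x ^ ((n:ℝ)-1) * g (u x))) := by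
    have hU : IntegrableOn (fun x : ℝ => x ^ ((n:ℝ)-1) * g (u x)) (⋃ i, Ioc (a i) (1/4:ℝ)) := by
      rw [hUnion]; exact hInt14
    have := tendsto_setIntegral_of_monotone (fun i => measurableSet_Ioc) hmono hU
    rwa [hUnion] at this
  have hLHS : ∫ r in Ioc (0:ℝ) (1/4:ℝ), r ^ ((n:ℝ)-1) * g (u r) ≤ B :=
    le_of_tendsto hlim (Eventually.of_forall fun i => hFTCle (a i) (ha_pos i) (ha_le i))
  -- lower bound on -u' on [1/4, 1)
  have hu'bd : ∀ r ∈ Ioo (0:ℝ) 1, 1/4 ≤ r → c * A ≤ -u' r := by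
    intro r hr hr4
    have h1 : F r ≤ F (1/4) := hFanti h14 hr hr4
    rw [hFform r hr, hF14, hB_def] at h1
    have h2 : (1/4:ℝ)^((n:ℝ)-1) * A^(p-1) ≤ r^((n:ℝ)-1) * (-u' r)^(p-1) := by linarith
    have hru : 0 < -u' r := neg_pos.2 (hu'neg r hr)
    have h3 : r^((n:ℝ)-1) * (-u' r)^(p-1) ≤ (-u' r)^(p-1) := by
      apply mul_le_of_le_one_left (Real.rpow_nonneg hru.le _)
      exact Real.rpow_le_one hr.1.le hr.2.le hnn
    have h4 : (c*A)^(p-1) ≤ (-u' r)^(p-1) := by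
      rw [Real.mul_rpow hc_pos.le hA.le, hcp]
      linarith
    exact (Real.rpow_le_rpow_iff (by positivity) hru.le hp1).mp h4
  -- lower bound on u on [1/4, 1/2]
  have hu_lb : ∀ s ∈ Icc (1/4:ℝ) (1/2:ℝ), (1/2:ℝ) * (c * A) ≤ u s := by
    intro s hs
    have hs0 : (0:ℝ) < s := lt_of_lt_of_le (by norm_num) hs.1
    have hs1 : s ≤ 1 := le_trans hs.2 (by norm_num)
    have hIccsub : Icc s 1 ⊆ Ioc (0:ℝ) 1 := fun x hx => ⟨lt_of_lt_of_le hs0 hx.1, hx.2⟩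
    have hFTCu : ∫ y in s..1, u' y = u 1 - u s := by
      apply intervalIntegral.integral_eq_sub_of_hasDeriv_right_of_le hs1 (hucont.mono hIccsub)
      · intro x hx
        exact ((hud x ⟨hs0.trans hx.1, hx.2.le⟩).hasDerivAt
          (Ioc_mem_nhds (hs0.trans hx.1) hx.2)).hasDerivWithinAt
      · rw [intervalIntegrable_iff_integrableOn_Icc_of_le hs1]
        exact (hu'c.mono hIccsub).integrableOn_Icc
    have hu'int : IntegrableOn u' (Ioo s 1) :=
      ((hu'c.mono hIccsub).integrableOn_Icc).mono_set Ioo_subset_Icc_self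
    have hbound : ∫ y in s..1, u' y ≤ -((1 - s) * (c * A)) := by
      rw [intervalIntegral.integral_of_le hs1, integral_Ioc_eq_integral_Ioo]
      calc ∫ y in Ioo s 1, u' y ≤ ∫ _y in Ioo s 1, -(c*A) := by
            apply setIntegral_mono_on hu'int
              (integrableOn_const measure_Ioo_lt_top.ne) measurableSet_Ioo
            intro x hx
            have := hu'bd x ⟨hs0.trans hx.1, hx.2⟩ (le_trans hs.1 hx.1.le)
            linarith
        _ = -((1 - s) * (c*A)) := by
            rw [setIntegral_const, Real.volume_real_Ioo, smul_eq_mul,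
              max_eq_left (by linarith)]
            ring
    have hprod : (1/2:ℝ) * (c*A) ≤ (1 - s) * (c*A) :=
      mul_le_mul_of_nonneg_right (by linarith [hs.2]) (by positivity)
    rw [hu1] at hFTCu
    rw [hFTCu] at hbound
    clear_value c A
    linarith
  -- RHS integral is well-defined and bounded below
  have hfm : ContinuousOn (fun s : ℝ => s ^ ((n:ℝ)-1) * u s ^ (p-1)) (Ioc (0:ℝ) (1/2)) := by
    apply ContinuousOn.mul
    · exact continuousOn_id.rpow_const fun x hx => Or.inl (ne_of_gt hx.1)
    · exact (hucont.mono (Ioc_subset_Ioc_right (by norm_num))).rpow_const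
        fun x hx => Or.inr (by linarith)
  have hrint : IntegrableOn (fun x : ℝ => x ^ ((n:ℝ)-1)) (Ioc (0:ℝ) 1) := by
    have : IntervalIntegrable (fun x : ℝ => x ^ ((n:ℝ)-1)) volume 0 1 :=
      intervalIntegral.intervalIntegrable_rpow' (by linarith)
    rwa [intervalIntegrable_iff_integrableOn_Ioc_of_le (by norm_num)] at this
  have hdom : IntegrableOn
      (fun s : ℝ => s ^ ((n:ℝ)-1) + s ^ ((n:ℝ)-1) * (|u s| ^ p + |u' s| ^ p)) (Ioc (0:ℝ) 1) :=
    hrint.add hInt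
  have hRint : IntegrableOn (fun s : ℝ => s ^ ((n:ℝ)-1) * u s ^ (p-1)) (Ioc (0:ℝ) (1/2)) := by
    apply Integrable.mono' (hdom.mono_set (Ioc_subset_Ioc_right (by norm_num)))
      (hfm.aestronglyMeasurable measurableSet_Ioc)
    rw [ae_restrict_iff' measurableSet_Ioc]
    filter_upwards with x hx
    have hux : 0 < u x := hupos x ⟨hx.1, lt_of_le_of_lt hx.2 (by norm_num)⟩
    have hxp : 0 ≤ x ^ ((n:ℝ)-1) := Real.rpow_nonneg hx.1.le _
    have hnorm : ‖x ^ ((n:ℝ)-1) * u x ^ (p-1)‖ = x ^ ((n:ℝ)-1) * u x ^ (p-1) :=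
      norm_of_nonneg (mul_nonneg hxp (Real.rpow_nonneg hux.le _))
    rw [hnorm]
    have habs' : |u x| = u x := abs_of_pos hux
    have h2 : (0:ℝ) ≤ |u' x| ^ p := Real.rpow_nonneg (abs_nonneg _) _
    have hup : u x ^ (p-1) ≤ 1 + (|u x| ^ p + |u' x| ^ p) := by
      rcases le_total (u x) 1 with h | h
      · have h5 := Real.rpow_le_one hux.le h (by linarith : (0:ℝ) ≤ p - 1)
        have h3 : (0:ℝ) ≤ |u x| ^ p := Real.rpow_nonneg (abs_nonneg _) _
        linarith
      · have h5 := Real.rpow_le_rpow_of_exponent_le h (by linarith : p - 1 ≤ p)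
        rw [habs']
        linarith
    calc x ^ ((n:ℝ)-1) * u x ^ (p-1) ≤ x ^ ((n:ℝ)-1) * (1 + (|u x|^p + |u' x|^p)) :=
          mul_le_mul_of_nonneg_left hup hxp
      _ = x ^ ((n:ℝ)-1) + x ^ ((n:ℝ)-1) * (|u x|^p + |u' x|^p) := by ring
  set K : ℝ := (1/4:ℝ)^((n:ℝ)-1) * ((1/2:ℝ) * (c * A))^(p-1) with hK_def
  have hstep1 : (1/4:ℝ) * K ≤ ∫ s in Ioc (1/4:ℝ) (1/2:ℝ), s ^ ((n:ℝ)-1) * u s ^ (p-1) := by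
    have hconst : ∫ _s in Ioc (1/4:ℝ) (1/2:ℝ), K = (1/4:ℝ) * K := by
      rw [setIntegral_const, Real.volume_real_Ioc, smul_eq_mul]
      norm_num
    rw [← hconst]
    apply setIntegral_mono_on (integrableOn_const measure_Ioc_lt_top.ne)
      (hRint.mono_set (Ioc_subset_Ioc_left (by norm_num))) measurableSet_Ioc
    intro x hx
    have hx4 : (1/4:ℝ) ≤ x := hx.1.le
    rw [hK_def]
    apply mul_le_mul
    · exact Real.rpow_le_rpow (by norm_num) hx4 hnn
    · exact Real.rpow_le_rpow (by positivity) (hu_lb x ⟨hx4, hx.2⟩) (by linarith)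
    · positivity
    · exact Real.rpow_nonneg (by linarith : (0:ℝ) ≤ x) _
  have hstep2 : ∫ s in Ioc (1/4:ℝ) (1/2:ℝ), s ^ ((n:ℝ)-1) * u s ^ (p-1)
      ≤ ∫ s in Ioc (0:ℝ) (1/2:ℝ), s ^ ((n:ℝ)-1) * u s ^ (p-1) := by
    apply setIntegral_mono_set hRint
    · rw [EventuallyLE, ae_restrict_iff' measurableSet_Ioc]
      filter_upwards with x hx
      have hux : 0 < u x := hupos x ⟨hx.1, lt_of_le_of_lt hx.2 (by norm_num)⟩
      have : 0 ≤ x ^ ((n:ℝ)-1) * u x ^ (p-1) :=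
        mul_nonneg (Real.rpow_nonneg hx.1.le _) (Real.rpow_nonneg hux.le _)
      simpa using this
    · exact HasSubset.Subset.eventuallyLE (Ioc_subset_Ioc_left (by norm_num))
  have hRlow : (1/4:ℝ) * K ≤ ∫ s in Ioc (0:ℝ) (1/2:ℝ), s ^ ((n:ℝ)-1) * u s ^ (p-1) :=
    le_trans hstep1 hstep2
  -- final arithmetic
  have h2 : (2:ℝ)^(p-1) * (1/2:ℝ)^(p-1) = 1 := by
    rw [← Real.mul_rpow (by norm_num) (by norm_num)]
    norm_num
  have h4 : (4:ℝ)^n * ((1/4:ℝ) * (1/4:ℝ)^((n:ℝ)-1)) = 1 := by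
    have hq : (1/4:ℝ) * (1/4:ℝ)^((n:ℝ)-1) = (1/4:ℝ)^((n:ℝ)) := by
      nth_rewrite 1 [← Real.rpow_one (1/4:ℝ)]
      rw [← Real.rpow_add (by norm_num : (0:ℝ) < 1/4)]
      norm_num
    rw [hq, Real.rpow_natCast, ← mul_pow]
    norm_num
  have hCK : ((4:ℝ)^n * 2^(p-1)) * ((1/4:ℝ) * K) = B := by
    rw [hK_def, hB_def,
      Real.mul_rpow (by norm_num : (0:ℝ) ≤ 1/2) (by positivity : (0:ℝ) ≤ c * A),
      Real.mul_rpow hc_pos.le hA.le, hcp]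
    linear_combination ((1/4:ℝ)^((n:ℝ)-1) * A^(p-1) *
        ((4:ℝ)^n * ((1/4:ℝ) * (1/4:ℝ)^((n:ℝ)-1)))) * h2 +
      ((1/4:ℝ)^((n:ℝ)-1) * A^(p-1)) * h4
  calc ∫ r in Ioc (0:ℝ) (1/4:ℝ), r ^ ((n:ℝ)-1) * g (u r) ≤ B := hLHS
    _ = ((4:ℝ)^n * 2^(p-1)) * ((1/4:ℝ) * K) := hCK.symm
    _ ≤ ((4:ℝ)^n * 2^(p-1)) * ∫ s in Ioc (0:ℝ) (1/2:ℝ), s ^ ((n:ℝ)-1) * u s ^ (p-1) :=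
        mul_le_mul_of_nonneg_left hRlow (by positivity)
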